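/- Let M be a q-starshaped subset of a real normed space X and S, T : M → M self-mappings with q ∈ Fix(S). Suppose (i) (S,T) is a generalized JH-suboperator pair with order n₀ for some n₀ ∈ ℕ, and (ii) for each x, y ∈ M and each k ∈ (0,1), ψ(∫₀^{‖Tx−Ty‖} φ(t)dt) ≤ F(ψ(∫₀^{(1/k)γ(m₃(x,y))} φ(t)dt), φᵤ(∫₀^{(1/k)γ(m₃(x,y))} φ(t)dt)), where ψ is an altering distance function, φᵤ is an ultra altering distance function, F is a C-class function, and the triple (ψ, φᵤ, F) is monotone. If M is bounded and complete, T is hemicompact, and S is continuous, then Fix(S) ∩ Fix(T) ≠ ∅. -/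

import Mathlib

open MeasureTheory Filter Topology Set

noncomputable section

/-- The integral `∫₀^a φ(t) dt`. -/
def intPhi (phi : ℝ → ℝ) (a : ℝ) : ℝ := ∫ t in (0:ℝ)..a, phi t

/-- `φ : [0,∞) → [0,∞)` is Lebesgue integrable, summable, nonnegative, with
`∫₀^ε φ(t)dt > 0` for all `ε > 0`. -/
def PhiAdmissible (phi : ℝ → ℝ) : Prop :=
  (∀ t ≥ (0:ℝ), 0 ≤ phi t) ∧ (∀ b : ℝ, IntervalIntegrable phi volume 0 b) ∧
  ∀ ε > (0:ℝ), 0 < intPhi phi ε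

/-- Altering distance function: nondecreasing, continuous, `ψ t = 0 ↔ t = 0` on `[0,∞)`. -/
def AlteringDistance (ψ : ℝ → ℝ) : Prop :=
  MonotoneOn ψ (Ici 0) ∧ ContinuousOn ψ (Ici 0) ∧ ∀ t ≥ (0:ℝ), (ψ t = 0 ↔ t = 0)

/-- Ultra altering distance function: continuous, nondecreasing, positive on `(0,∞)`,
nonnegative at `0`. -/
def UltraAltering (φu : ℝ → ℝ) : Prop :=
  ContinuousOn φu (Ici 0) ∧ MonotoneOn φu (Ici 0) ∧ (∀ t > (0:ℝ), 0 < φu t) ∧ 0 ≤ φu 0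

/-- C-class function: continuous on `[0,∞)²`, `F s t ≤ s`, and `F s t = s → s = 0 ∨ t = 0`. -/
def CClassFun (F : ℝ → ℝ → ℝ) : Prop :=
  ContinuousOn (Function.uncurry F) (Ici 0 ×ˢ Ici 0) ∧
  (∀ s ≥ (0:ℝ), ∀ t ≥ (0:ℝ), F s t ≤ s) ∧
  (∀ s ≥ (0:ℝ), ∀ t ≥ (0:ℝ), F s t = s → s = 0 ∨ t = 0)

/-- The triple `(ψ, φᵤ, F)` is monotone. -/
def MonotoneTriple (ψ φu : ℝ → ℝ) (F : ℝ → ℝ → ℝ) : Prop :=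
  ∀ x y : ℝ, 0 ≤ x → x ≤ y → F (ψ x) (φu x) ≤ F (ψ y) (φu y)

/-- The triple `(ψ, φᵤ, F)` is strictly monotone. -/
def StrictMonotoneTriple (ψ φu : ℝ → ℝ) (F : ℝ → ℝ → ℝ) : Prop :=
  ∀ x y : ℝ, 0 ≤ x → x < y → F (ψ x) (φu x) < F (ψ y) (φu y)

/-- `γ : (0,∞) → (0,∞)` is nondecreasing with `γ t < t` for all `t > 0`. -/
def GammaAdmissible (γ : ℝ → ℝ) : Prop :=
  (∀ t > (0:ℝ), 0 < γ t) ∧ MonotoneOn γ (Ioi 0) ∧ ∀ t > (0:ℝ), γ t < t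

variable {X : Type*} [NormedAddCommGroup X] [NormedSpace ℝ X]

/-- Fixed points of `T` lying in `M`. -/
def FixOn (T : X → X) (M : Set X) : Set X := {x ∈ M | T x = x}

/-- Points of coincidence `PC(S,T)` of the pair `(S,T)` over the set `M`. -/
def PCset (S T : X → X) (M : Set X) : Set X := {w | ∃ x ∈ M, S x = w ∧ T x = w}

/-- `(S,T)` is a generalized JH-operator pair with order `n` on `M`:
there is `x ∈ M` and `w = Sx = Tx ∈ PC(S,T)` with `‖w - x‖ ≤ (δ(PC(S,T)))ⁿ`. -/
def GenJHOp (S T : X → X) (M : Set X) (n : ℕ) : Prop :=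
  ∃ x ∈ M, S x = T x ∧ ‖S x - x‖ ≤ Metric.diam (PCset S T M) ^ n

/-- `(S,T)` is a generalized JH-suboperator pair with order `n` on `M` (w.r.t. `q`):
for each `k ∈ [0,1]`, `(S, T_k)` with `T_k x = (1-k)q + kTx` is a generalized JH-operator
pair with order `n`. -/
def GenJHSubOp (S T : X → X) (M : Set X) (q : X) (n : ℕ) : Prop :=
  ∀ k ∈ Icc (0:ℝ) 1, GenJHOp S (fun x => (1 - k) • q + k • T x) M n

/-- `M` is `q`-starshaped. -/
def Starshaped (M : Set X) (q : X) : Prop :=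
  q ∈ M ∧ ∀ x ∈ M, segment ℝ q x ⊆ M

def m1 (S T : X → X) (x y : X) : ℝ :=
  max (max ‖S x - S y‖ ‖S x - T x‖)
    (max ‖S y - T y‖ ((‖T x - T y‖ + ‖S y - T x‖) / 2))

def n1 (S T : X → X) (x y : X) : ℝ :=
  max ‖S x - S y‖ (max ‖T x - S x‖ ‖S y - T y‖)

def m2 (S T : X → X) (x y : X) : ℝ :=
  max (max ‖S x - S y‖ ‖S x - T x‖)
    (max ‖S y - T y‖ ((‖S x - T y‖ + ‖S y - T x‖) / 2))

def m3 (S T : X → X) (q x y : X) : ℝ :=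
  max (max ‖S x - S y‖ (Metric.infDist (S x) (segment ℝ q (T x))))
    (max (Metric.infDist (S y) (segment ℝ q (T y)))
      ((Metric.infDist (S x) (segment ℝ q (T y)) +
        Metric.infDist (S y) (segment ℝ q (T x))) / 2))

/-- `Y^{a} = {f_a(k) : k ∈ [0,1]}` for a family `f`. -/
def Yfam (f : X → ℝ → X) (a : X) : Set X := f a '' Icc (0:ℝ) 1

def m4 (f : X → ℝ → X) (S T : X → X) (x y : X) : ℝ :=
  max (max ‖S x - S y‖ (Metric.infDist (S x) (Yfam f (T x))))
    (max (Metric.infDist (S y) (Yfam f (T y)))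
      ((Metric.infDist (S x) (Yfam f (T y)) +
        Metric.infDist (S y) (Yfam f (T x))) / 2))

/-- `ℑ = {f_α}_{α ∈ M}` is a family of functions `[0,1] → M` with `f_α(1) = α`. -/
def FamilyOn (f : X → ℝ → X) (M : Set X) : Prop :=
  (∀ a ∈ M, ∀ t ∈ Icc (0:ℝ) 1, f a t ∈ M) ∧ ∀ a ∈ M, f a 1 = a

/-- The family is contractive with contractiveness function `Φ : (0,1) → (0,1)`. -/
def ContractiveFamily (f : X → ℝ → X) (M : Set X) (Phi : ℝ → ℝ) : Prop :=
  (∀ t ∈ Ioo (0:ℝ) 1, Phi t ∈ Ioo (0:ℝ) 1) ∧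
  ∀ a ∈ M, ∀ b ∈ M, ∀ t ∈ Ioo (0:ℝ) 1, ‖f a t - f b t‖ ≤ Phi t * ‖a - b‖

/-- The family is jointly continuous: `tₙ → t₀` and `αₙ → α₀` imply
`f_{αₙ}(tₙ) → f_{α₀}(t₀)`. -/
def JointlyContinuousFamily (f : X → ℝ → X) (M : Set X) : Prop :=
  ∀ (tn : ℕ → ℝ) (t0 : ℝ), (∀ n, tn n ∈ Icc (0:ℝ) 1) → t0 ∈ Icc (0:ℝ) 1 →
    Tendsto tn atTop (𝓝 t0) →
    ∀ (an : ℕ → X) (a0 : X), (∀ n, an n ∈ M) → a0 ∈ M →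
      Tendsto an atTop (𝓝 a0) →
      Tendsto (fun n => f (an n) (tn n)) atTop (𝓝 (f a0 t0))

/-- `(S,T)` is a generalized JHℑ-suboperator pair with order `n` on `M`:
for each `k ∈ [0,1]`, `(S, T_k)` with `T_k x = f_{Tx}(k)` is a generalized
JH-operator pair with order `n`. -/
def GenJHImSubOp (f : X → ℝ → X) (S T : X → X) (M : Set X) (n : ℕ) : Prop :=
  ∀ k ∈ Icc (0:ℝ) 1, GenJHOp S (fun x => f (T x) k) M n

/-- Weak convergence of a sequence. -/
def WeakTendsTo (x : ℕ → X) (a : X) : Prop :=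
  ∀ f : StrongDual ℝ X, Tendsto (fun n => f (x n)) atTop (𝓝 (f a))

/-- Weak (sequential) closure. -/
def WSeqCl (A : Set X) : Set X := {a | ∃ x : ℕ → X, (∀ n, x n ∈ A) ∧ WeakTendsTo x a}

/-- Weak (sequential) compactness. -/
def WSeqCompact (A : Set X) : Prop :=
  ∀ x : ℕ → X, (∀ n, x n ∈ A) →
    ∃ a ∈ A, ∃ g : ℕ → ℕ, StrictMono g ∧ WeakTendsTo (x ∘ g) a

/-- `T` is completely continuous on `M`: weak convergence implies strong
convergence of images. -/
def CompletelyContinuousOn (T : X → X) (M : Set X) : Prop :=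
  ∀ (x : ℕ → X) (a : X), (∀ n, x n ∈ M) → a ∈ M → WeakTendsTo x a →
    Tendsto (fun n => T (x n)) atTop (𝓝 (T a))

/-- `S` is weakly continuous on `M`. -/
def WeaklyContinuousOn (S : X → X) (M : Set X) : Prop :=
  ∀ (x : ℕ → X) (a : X), (∀ n, x n ∈ M) → a ∈ M → WeakTendsTo x a →
    WeakTendsTo (fun n => S (x n)) (S a)

/-- `G` is demiclosed at `0` on `M`. -/
def DemiclosedAtZero (G : X → X) (M : Set X) : Prop :=
  ∀ (x : ℕ → X) (a : X), (∀ n, x n ∈ M) → a ∈ M → WeakTendsTo x a →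
    Tendsto (fun n => G (x n)) atTop (𝓝 (0 : X)) → G a = 0

/-- `T` is hemicompact on `M`. -/
def Hemicompact (T : X → X) (M : Set X) : Prop :=
  ∀ x : ℕ → X, (∀ n, x n ∈ M) →
    Tendsto (fun n => ‖x n - T (x n)‖) atTop (𝓝 (0 : ℝ)) →
    ∃ (a : X) (g : ℕ → ℕ), StrictMono g ∧ Tendsto (x ∘ g) atTop (𝓝 a)

/-- Opial's condition. -/
def OpialCondition (Y : Type*) [NormedAddCommGroup Y] [NormedSpace ℝ Y] : Prop :=
  ∀ (x : ℕ → Y) (a : Y), WeakTendsTo x a → ∀ y : Y, y ≠ a →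
    liminf (fun n => ‖x n - a‖) atTop < liminf (fun n => ‖x n - y‖) atTop

/-- `P_M(u)`, the set of best approximations to `u` out of `M`. -/
def PMset (M : Set X) (u : X) : Set X := {x ∈ M | ‖x - u‖ = Metric.infDist u M}

/-- `C_M^S(u) = {x ∈ M : Sx ∈ P_M(u)}`. -/
def CMSset (M : Set X) (S : X → X) (u : X) : Set X := {x ∈ M | S x ∈ PMset M u}



section MyHelpers

variable {phi ψ φu : ℝ → ℝ} {F : ℝ → ℝ → ℝ}

lemma my_intPhi_nonneg (hphi : PhiAdmissible phi) {a : ℝ} (ha : 0 ≤ a) :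
    0 ≤ intPhi phi a :=
  intervalIntegral.integral_nonneg ha (fun u hu => hphi.1 u hu.1)

lemma my_intPhi_mono (hphi : PhiAdmissible phi) {a b : ℝ} (ha : 0 ≤ a) (hab : a ≤ b) :
    intPhi phi a ≤ intPhi phi b := by
  have hint : IntervalIntegrable phi volume a b := (hphi.2.1 a).symm.trans (hphi.2.1 b)
  have h := intervalIntegral.integral_add_adjacent_intervals (hphi.2.1 a) hint
  have hnn : 0 ≤ ∫ t in a..b, phi t :=
    intervalIntegral.integral_nonneg hab (fun u hu => hphi.1 u (ha.trans hu.1))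
  show (∫ t in (0:ℝ)..a, phi t) ≤ ∫ t in (0:ℝ)..b, phi t
  linarith

lemma my_intPhi_cont (hphi : PhiAdmissible phi) : Continuous (intPhi phi) :=
  intervalIntegral.continuous_primitive
    (fun a b => (hphi.2.1 a).symm.trans (hphi.2.1 b)) 0

lemma my_psi_zero (hψ : AlteringDistance ψ) : ψ 0 = 0 := (hψ.2.2 0 le_rfl).mpr rfl

lemma my_psi_nonneg (hψ : AlteringDistance ψ) {t : ℝ} (ht : 0 ≤ t) : 0 ≤ ψ t := by
  have := hψ.1 (mem_Ici.mpr le_rfl) (mem_Ici.mpr ht) ht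
  rw [my_psi_zero hψ] at this; exact this

lemma my_phiu_nonneg (hφu : UltraAltering φu) {t : ℝ} (ht : 0 ≤ t) : 0 ≤ φu t := by
  have := hφu.2.1 (mem_Ici.mpr le_rfl) (mem_Ici.mpr ht) ht
  exact hφu.2.2.2.trans this

/-- Key contraction consequence: if the contractive inequality holds with
`0 ≤ E ≤ D`, then `D ≤ 0`. -/
lemma my_lemA (hphi : PhiAdmissible phi) (hψ : AlteringDistance ψ)
    (hφu : UltraAltering φu) (hF : CClassFun F) {D E : ℝ} (hE0 : 0 ≤ E) (hED : E ≤ D)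
    (h : ψ (intPhi phi D) ≤ F (ψ (intPhi phi E)) (φu (intPhi phi E))) : D ≤ 0 := by
  by_contra hD
  push_neg at hD
  set IE := intPhi phi E with hIEdef
  set ID := intPhi phi D with hIDdef
  have hIE0 : 0 ≤ IE := my_intPhi_nonneg hphi hE0
  have hIEID : IE ≤ ID := my_intPhi_mono hphi hE0 hED
  have hID0 : 0 < ID := hphi.2.2 D hD
  have hψIE : 0 ≤ ψ IE := my_psi_nonneg hψ hIE0
  have hφIE : 0 ≤ φu IE := my_phiu_nonneg hφu hIE0
  have hFle : F (ψ IE) (φu IE) ≤ ψ IE := hF.2.1 _ hψIE _ hφIE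
  have hmon : ψ IE ≤ ψ ID := hψ.1 (mem_Ici.mpr hIE0) (mem_Ici.mpr hID0.le) hIEID
  have heq : F (ψ IE) (φu IE) = ψ IE := le_antisymm hFle (by linarith)
  have hψIE0 : ψ IE = 0 := by
    rcases hF.2.2 _ hψIE _ hφIE heq with h0 | h0
    · exact h0
    · have hIE : IE = 0 := by
        by_contra hne
        have hpos : 0 < IE := lt_of_le_of_ne hIE0 (Ne.symm hne)
        exact absurd h0 (ne_of_gt (hφu.2.2.1 _ hpos))
      rw [hIE]; exact my_psi_zero hψ
  have hψID : ψ ID = 0 := le_antisymm (by linarith) (my_psi_nonneg hψ hID0.le)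
  have : ID = 0 := (hψ.2.2 ID hID0.le).mp hψID
  linarith

lemma my_tendsto_comp_contOn {f : ℝ → ℝ} (hf : ContinuousOn f (Ici 0)) {u : ℕ → ℝ}
    {l : ℝ} (hu : ∀ m, 0 ≤ u m) (hl : 0 ≤ l) (h : Tendsto u atTop (𝓝 l)) :
    Tendsto (fun m => f (u m)) atTop (𝓝 (f l)) :=
  (hf l (mem_Ici.mpr hl)).tendsto.comp
    (tendsto_nhdsWithin_iff.mpr ⟨h, Eventually.of_forall (fun m => mem_Ici.mpr (hu m))⟩)

lemma my_tendsto_F (hF : CClassFun F) {s t : ℕ → ℝ} {s0 t0 : ℝ} (hs0 : 0 ≤ s0)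
    (ht0 : 0 ≤ t0) (hsn : ∀ m, 0 ≤ s m) (htn : ∀ m, 0 ≤ t m)
    (hs : Tendsto s atTop (𝓝 s0)) (ht : Tendsto t atTop (𝓝 t0)) :
    Tendsto (fun m => F (s m) (t m)) atTop (𝓝 (F s0 t0)) := by
  have hcw := (hF.1 (s0, t0) (Set.mk_mem_prod (mem_Ici.mpr hs0) (mem_Ici.mpr ht0))).tendsto
  have hp : Tendsto (fun m => ((s m, t m) : ℝ × ℝ)) atTop
      (𝓝[Ici (0:ℝ) ×ˢ Ici (0:ℝ)] (s0, t0)) :=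
    tendsto_nhdsWithin_iff.mpr ⟨hs.prodMk_nhds ht,
      Eventually.of_forall (fun m => Set.mk_mem_prod (mem_Ici.mpr (hsn m)) (mem_Ici.mpr (htn m)))⟩
  exact hcw.comp hp

end MyHelpers

theorem stmt_5 {X : Type*} [NormedAddCommGroup X] [NormedSpace ℝ X]
    (M : Set X) (q : X) (hstar : Starshaped M q) (S T : X → X)
    (hS : MapsTo S M M) (hT : MapsTo T M M) (hq : S q = q)
    (phi ψ φu : ℝ → ℝ) (F : ℝ → ℝ → ℝ)
    (hphi : PhiAdmissible phi) (hψ : AlteringDistance ψ) (hφu : UltraAltering φu)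
    (hF : CClassFun F) (hmono : MonotoneTriple ψ φu F)
    (γ : ℝ → ℝ) (hγ : GammaAdmissible γ)
    (n₀ : ℕ) (hn₀ : 1 ≤ n₀) (hJH : GenJHSubOp S T M q n₀)
    (hcontr : ∀ x ∈ M, ∀ y ∈ M, ∀ k ∈ Ioo (0:ℝ) 1,
      ψ (intPhi phi ‖T x - T y‖) ≤
        F (ψ (intPhi phi ((1 / k) * γ (m3 S T q x y))))
          (φu (intPhi phi ((1 / k) * γ (m3 S T q x y)))))
    (hMb : Bornology.IsBounded M) (hMc : IsComplete M)
    (hTh : Hemicompact T M) (hScont : ContinuousOn S M) :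
    ∃ x ∈ M, S x = x ∧ T x = x := by
  obtain ⟨hqM, _hseg⟩ := hstar
  -- Step 1: for k ∈ (0,1), the set of coincidence values of (S, T_k) is a subsingleton.
  have hsub : ∀ k ∈ Ioo (0:ℝ) 1,
      Set.Subsingleton (PCset S (fun x => (1 - k) • q + k • T x) M) := by
    rintro k ⟨hk0, hk1⟩ w₁ ⟨x, hxM, hSx, hTx⟩ w₂ ⟨y, hyM, hSy, hTy⟩
    have hTx' : (1 - k) • q + k • T x = w₁ := hTx
    have hTy' : (1 - k) • q + k • T y = w₂ := hTy
    by_contra hw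
    set D := ‖T x - T y‖ with hDdef
    have hDpos : 0 < D := by
      rw [hDdef, norm_pos_iff, sub_ne_zero]
      intro h
      apply hw
      rw [← hTx', ← hTy', h]
    have hwsub : w₁ - w₂ = k • (T x - T y) := by
      rw [← hTx', ← hTy']; module
    have hnw : ‖w₁ - w₂‖ = k * D := by
      rw [hwsub, norm_smul, Real.norm_eq_abs, abs_of_nonneg hk0.le]
    have hw1seg : w₁ ∈ segment ℝ q (T x) :=
      ⟨1 - k, k, by linarith, hk0.le, by ring, hTx'⟩
    have hw2seg : w₂ ∈ segment ℝ q (T y) :=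
      ⟨1 - k, k, by linarith, hk0.le, by ring, hTy'⟩
    have hm3le : m3 S T q x y ≤ k * D := by
      have h1 : ‖S x - S y‖ = k * D := by rw [hSx, hSy, hnw]
      have hkD : (0:ℝ) ≤ k * D := by positivity
      have h2 : Metric.infDist (S x) (segment ℝ q (T x)) ≤ k * D := by
        rw [hSx]
        have h := Metric.infDist_le_dist_of_mem (x := w₁) hw1seg
        rw [dist_self] at h
        exact h.trans hkD
      have h3 : Metric.infDist (S y) (segment ℝ q (T y)) ≤ k * D := by
        rw [hSy]
        have h := Metric.infDist_le_dist_of_mem (x := w₂) hw2seg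
        rw [dist_self] at h
        exact h.trans hkD
      have h4 : Metric.infDist (S x) (segment ℝ q (T y)) ≤ k * D := by
        rw [hSx]
        have h := Metric.infDist_le_dist_of_mem (x := w₁) hw2seg
        rwa [dist_eq_norm, hnw] at h
      have h5 : Metric.infDist (S y) (segment ℝ q (T x)) ≤ k * D := by
        rw [hSy]
        have h := Metric.infDist_le_dist_of_mem (x := w₂) hw1seg
        rwa [dist_eq_norm, ← norm_sub_rev, hnw] at h
      exact max_le (max_le (le_of_eq h1) h2) (max_le h3 (by linarith))
    have hm3pos : 0 < m3 S T q x y := by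
      have hlb : ‖S x - S y‖ ≤ m3 S T q x y := (le_max_left _ _).trans (le_max_left _ _)
      have : 0 < ‖S x - S y‖ := by
        rw [hSx, hSy, norm_pos_iff, sub_ne_zero]; exact hw
      linarith
    have hγpos : 0 < γ (m3 S T q x y) := hγ.1 _ hm3pos
    have hE0 : 0 ≤ (1 / k) * γ (m3 S T q x y) := by positivity
    have hED : (1 / k) * γ (m3 S T q x y) ≤ D := by
      have hlt : γ (m3 S T q x y) < k * D := lt_of_lt_of_le (hγ.2.2 _ hm3pos) hm3le
      rw [div_mul_eq_mul_div, one_mul, div_le_iff₀ hk0]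
      linarith [mul_comm k D]
    have := my_lemA hphi hψ hφu hF hE0 hED (hcontr x hxM y hyM k ⟨hk0, hk1⟩)
    linarith
  -- Step 2: for k ∈ (0,1), there is a fixed point of S solving x = (1-k)q + kTx.
  have hfix : ∀ k ∈ Ioo (0:ℝ) 1, ∃ x ∈ M, S x = x ∧ x = (1 - k) • q + k • T x := by
    intro k hk
    obtain ⟨x, hxM, hco, hbd⟩ := hJH k ⟨hk.1.le, hk.2.le⟩
    have hco' : S x = (1 - k) • q + k • T x := hco
    have hdiam : Metric.diam (PCset S (fun x => (1 - k) • q + k • T x) M) = 0 :=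
      Metric.diam_subsingleton (hsub k hk)
    rw [hdiam, zero_pow (by omega : n₀ ≠ 0)] at hbd
    have hSxx : S x = x := by
      have h0 : ‖S x - x‖ = 0 := le_antisymm hbd (norm_nonneg _)
      rw [norm_eq_zero, sub_eq_zero] at h0
      exact h0
    exact ⟨x, hxM, hSxx, by nth_rewrite 1 [← hSxx]; exact hco'⟩
  -- The approximating sequence.
  set k : ℕ → ℝ := fun n => 1 - 1 / ((n : ℝ) + 2) with hkdef
  have hkIoo : ∀ n, k n ∈ Ioo (0:ℝ) 1 := by
    intro n
    have h2 : (0:ℝ) < (n : ℝ) + 2 := by positivity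
    constructor
    · have : 1 / ((n : ℝ) + 2) < 1 := by
        rw [div_lt_one h2]; have := Nat.cast_nonneg (α := ℝ) n; linarith
      simp only [hkdef]; linarith
    · have : 0 < 1 / ((n : ℝ) + 2) := by positivity
      simp only [hkdef]; linarith
  have hk1 : Tendsto k atTop (𝓝 1) := by
    have h1 : Tendsto (fun n : ℕ => ((n : ℝ) + 2)) atTop atTop :=
      tendsto_atTop_add_const_right _ _ tendsto_natCast_atTop_atTop
    have h2 : Tendsto (fun n : ℕ => 1 / ((n : ℝ) + 2)) atTop (𝓝 0) := by
      simpa [one_div, Pi.inv_def] using h1.inv_tendsto_atTop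
    have h3 := (tendsto_const_nhds (x := (1:ℝ)) (f := atTop)).sub h2
    rw [hkdef]
    simpa using h3
  choose x hxM hSfix hxeq using fun n => hfix (k n) (hkIoo n)
  obtain ⟨C, hC⟩ := Metric.isBounded_iff.mp hMb
  have hxT : ∀ n, ‖x n - T (x n)‖ = (1 - k n) * ‖q - T (x n)‖ := by
    intro n
    have h1 : x n - T (x n) = (1 - k n) • (q - T (x n)) := by
      nth_rewrite 1 [hxeq n]; module
    rw [h1, norm_smul, Real.norm_eq_abs, abs_of_nonneg (by linarith [(hkIoo n).2])]
  have hto0 : Tendsto (fun n => ‖x n - T (x n)‖) atTop (𝓝 0) := by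
    have hb : ∀ n, ‖x n - T (x n)‖ ≤ (1 - k n) * C := by
      intro n
      rw [hxT n]
      have hd : ‖q - T (x n)‖ ≤ C := by
        rw [← dist_eq_norm]; exact hC hqM (hT (hxM n))
      exact mul_le_mul_of_nonneg_left hd (by linarith [(hkIoo n).2])
    have hlim : Tendsto (fun n => (1 - k n) * C) atTop (𝓝 0) := by
      have := ((tendsto_const_nhds (x := (1:ℝ)) (f := atTop)).sub hk1).mul_const C
      simpa using this
    exact squeeze_zero (fun n => norm_nonneg _) hb hlim
  obtain ⟨a, g, hg, hga⟩ := hTh x hxM hto0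
  have haM : a ∈ M := hMc.isClosed.mem_of_tendsto hga
    (Eventually.of_forall (fun m => hxM (g m)))
  -- S a = a
  have hSa : S a = a := by
    have h1 : Tendsto (fun m => S (x (g m))) atTop (𝓝 (S a)) :=
      (hScont a haM).tendsto.comp (tendsto_nhdsWithin_iff.mpr
        ⟨hga, Eventually.of_forall (fun m => hxM (g m))⟩)
    have h2 : (fun m => S (x (g m))) = fun m => x (g m) :=
      funext fun m => hSfix (g m)
    rw [h2] at h1
    exact tendsto_nhds_unique h1 hga
  -- T (x (g m)) → a
  have hTga : Tendsto (fun m => T (x (g m))) atTop (𝓝 a) := by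
    have hz : Tendsto (fun m => x (g m) - T (x (g m))) atTop (𝓝 0) := by
      rw [tendsto_zero_iff_norm_tendsto_zero]
      exact hto0.comp hg.tendsto_atTop
    have heq : (fun m => T (x (g m))) = fun m => x (g m) - (x (g m) - T (x (g m))) := by
      funext m; abel
    rw [heq]
    simpa using hga.sub hz
  have hkg1 : Tendsto (fun m => k (g m)) atTop (𝓝 1) := hk1.comp hg.tendsto_atTop
  -- T a = a
  have hTa : T a = a := by
    by_cases hfr : ∃ᶠ m in atTop, x (g m) = a
    · -- Case A
      by_contra hTa
      have hd0pos : 0 < ‖a - T a‖ := by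
        rw [norm_pos_iff, sub_ne_zero]; exact fun h => hTa h.symm
      have hval : ∀ m, x (g m) = a → ‖a - T a‖ = (1 - k (g m)) * ‖q - T a‖ := by
        intro m hm
        have h1 : a = (1 - k (g m)) • q + (k (g m)) • T a := by
          rw [← hm]; nth_rewrite 1 [hxeq (g m)]; rw [hm]
        have h2 : a - T a = (1 - k (g m)) • (q - T a) := by
          nth_rewrite 1 [h1]; module
        rw [h2, norm_smul, Real.norm_eq_abs, abs_of_nonneg (by linarith [(hkIoo (g m)).2])]
      have hv : Tendsto (fun m => (1 - k (g m)) * ‖q - T a‖) atTop (𝓝 0) := by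
        have := ((tendsto_const_nhds (x := (1:ℝ)) (f := atTop)).sub hkg1).mul_const ‖q - T a‖
        simpa using this
      have hev : ∀ᶠ m in atTop, (1 - k (g m)) * ‖q - T a‖ < ‖a - T a‖ :=
        hv.eventually (eventually_lt_nhds hd0pos)
      obtain ⟨m, hm1, hm2⟩ := (hfr.and_eventually hev).exists
      rw [← hval m hm1] at hm2
      exact lt_irrefl _ hm2
    · -- Case B
      have hev : ∀ᶠ m in atTop, x (g m) ≠ a := not_frequently.mp hfr
      by_contra hTa
      set d0 := ‖T a - a‖ with hd0def
      have hd0pos : 0 < d0 := by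
        rw [hd0def, norm_pos_iff, sub_ne_zero]; exact hTa
      set ε : ℕ → ℝ := fun m => ‖x (g m) - a‖ with hεdef
      set Dd : ℕ → ℝ := fun m => ‖T (x (g m)) - T a‖ with hDdef
      have hεto : Tendsto ε atTop (𝓝 0) := by
        rw [← tendsto_iff_norm_sub_tendsto_zero]; exact hga
      have hDto : Tendsto Dd atTop (𝓝 d0) := by
        have := (hTga.sub (tendsto_const_nhds (x := T a))).norm
        simpa [hDdef, hd0def, norm_sub_rev a (T a)] using this
      -- bounds on m3 for x (g m) ≠ a
      have hm3f : ∀ m, x (g m) ≠ a →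
          0 < m3 S T q (x (g m)) a ∧ m3 S T q (x (g m)) a ≤ d0 + 2 * ε m := by
        intro m hm
        have hSx : S (x (g m)) = x (g m) := hSfix (g m)
        have hxseg : x (g m) ∈ segment ℝ q (T (x (g m))) :=
          ⟨1 - k (g m), k (g m), by linarith [(hkIoo (g m)).2],
            (hkIoo (g m)).1.le, by ring, (hxeq (g m)).symm⟩
        have hεpos : 0 < ε m := by
          rw [hεdef, norm_pos_iff, sub_ne_zero]; exact hm
        have hεnn : 0 ≤ ε m := hεpos.le
        constructor
        · have hlb : ‖S (x (g m)) - S a‖ ≤ m3 S T q (x (g m)) a :=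
            (le_max_left _ _).trans (le_max_left _ _)
          have : 0 < ‖S (x (g m)) - S a‖ := by rw [hSx, hSa]; exact hεpos
          linarith
        · have hzero : Metric.infDist (x (g m)) (segment ℝ q (T (x (g m)))) = 0 := by
            have h := Metric.infDist_le_dist_of_mem (x := x (g m)) hxseg
            rw [dist_self] at h
            exact le_antisymm h Metric.infDist_nonneg
          have e1 : ‖S (x (g m)) - S a‖ ≤ d0 + 2 * ε m := by
            rw [hSx, hSa]; show ε m ≤ _; linarith [hd0pos.le]
          have e2 : Metric.infDist (S (x (g m))) (segment ℝ q (T (x (g m)))) ≤ d0 + 2 * ε m := by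
            rw [hSx, hzero]; linarith [hd0pos.le]
          have e2' : Metric.infDist a (segment ℝ q (T (x (g m)))) ≤ ε m := by
            have h1 := Metric.infDist_le_infDist_add_dist (x := a) (y := x (g m))
              (s := segment ℝ q (T (x (g m))))
            have h2 : dist a (x (g m)) = ε m := by
              rw [dist_eq_norm, norm_sub_rev]
            rw [hzero, h2] at h1
            simpa using h1
          have e3 : Metric.infDist a (segment ℝ q (T a)) ≤ d0 := by
            have h := Metric.infDist_le_dist_of_mem (x := a) (right_mem_segment ℝ q (T a))
            rw [dist_eq_norm, norm_sub_rev] at h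
            exact h
          have e4 : Metric.infDist (x (g m)) (segment ℝ q (T a)) ≤ d0 + ε m := by
            have h1 := Metric.infDist_le_infDist_add_dist (x := x (g m)) (y := a)
              (s := segment ℝ q (T a))
            have h2 : dist (x (g m)) a = ε m := dist_eq_norm _ _
            rw [h2] at h1
            linarith
          refine max_le (max_le e1 e2) (max_le ?_ ?_)
          · rw [hSa]; linarith
          · rw [hSx, hSa]; linarith
      -- fixed k: limit inequality
      have hkey : ∀ j : ℕ, ψ (intPhi phi d0) ≤
          F (ψ (intPhi phi ((1 / k j) * d0))) (φu (intPhi phi ((1 / k j) * d0))) := by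
        intro j
        obtain ⟨hkj0, hkj1⟩ := hkIoo j
        have hevle : ∀ᶠ m in atTop, ψ (intPhi phi (Dd m)) ≤
            F (ψ (intPhi phi ((1 / k j) * (d0 + 2 * ε m))))
              (φu (intPhi phi ((1 / k j) * (d0 + 2 * ε m)))) := by
          filter_upwards [hev] with m hm
          obtain ⟨hm3pos, hm3le⟩ := hm3f m hm
          have hγpos : 0 < γ (m3 S T q (x (g m)) a) := hγ.1 _ hm3pos
          have hE0 : 0 ≤ (1 / k j) * γ (m3 S T q (x (g m)) a) := by positivity
          have hEle : (1 / k j) * γ (m3 S T q (x (g m)) a) ≤ (1 / k j) * (d0 + 2 * ε m) := by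
            apply mul_le_mul_of_nonneg_left _ (by positivity)
            exact le_trans (hγ.2.2 _ hm3pos).le hm3le
          have hint0 : 0 ≤ intPhi phi ((1 / k j) * γ (m3 S T q (x (g m)) a)) :=
            my_intPhi_nonneg hphi hE0
          have hintle : intPhi phi ((1 / k j) * γ (m3 S T q (x (g m)) a)) ≤
              intPhi phi ((1 / k j) * (d0 + 2 * ε m)) :=
            my_intPhi_mono hphi hE0 hEle
          exact le_trans (hcontr (x (g m)) (hxM (g m)) a haM (k j) ⟨hkj0, hkj1⟩)
            (hmono _ _ hint0 hintle)
        have hεnn : ∀ m, 0 ≤ ε m := fun m => norm_nonneg _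
        have harg : ∀ m, 0 ≤ (1 / k j) * (d0 + 2 * ε m) := by
          intro m; have := hεnn m; positivity
        have hlimarg : Tendsto (fun m => (1 / k j) * (d0 + 2 * ε m)) atTop
            (𝓝 ((1 / k j) * d0)) := by
          have := (tendsto_const_nhds (x := d0) (f := atTop)).add
            ((hεto.const_mul (2:ℝ)))
          have h2 := this.const_mul (1 / k j)
          simpa [mul_comm] using h2
        have hintto : Tendsto (fun m => intPhi phi ((1 / k j) * (d0 + 2 * ε m))) atTop
            (𝓝 (intPhi phi ((1 / k j) * d0))) :=
          ((my_intPhi_cont hphi).tendsto _).comp hlimarg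
        have hJnn : ∀ m, 0 ≤ intPhi phi ((1 / k j) * (d0 + 2 * ε m)) :=
          fun m => my_intPhi_nonneg hphi (harg m)
        have hJ0nn : 0 ≤ intPhi phi ((1 / k j) * d0) :=
          my_intPhi_nonneg hphi (by positivity)
        have hLHS : Tendsto (fun m => ψ (intPhi phi (Dd m))) atTop
            (𝓝 (ψ (intPhi phi d0))) := by
          apply my_tendsto_comp_contOn hψ.2.1
            (fun m => my_intPhi_nonneg hphi (norm_nonneg _))
            (my_intPhi_nonneg hphi hd0pos.le)
          exact ((my_intPhi_cont hphi).tendsto _).comp hDto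
        have hRHS : Tendsto (fun m => F (ψ (intPhi phi ((1 / k j) * (d0 + 2 * ε m))))
            (φu (intPhi phi ((1 / k j) * (d0 + 2 * ε m))))) atTop
            (𝓝 (F (ψ (intPhi phi ((1 / k j) * d0))) (φu (intPhi phi ((1 / k j) * d0))))) := by
          apply my_tendsto_F hF (my_psi_nonneg hψ hJ0nn) (my_phiu_nonneg hφu hJ0nn)
            (fun m => my_psi_nonneg hψ (hJnn m)) (fun m => my_phiu_nonneg hφu (hJnn m))
          · exact my_tendsto_comp_contOn hψ.2.1 hJnn hJ0nn hintto
          · exact my_tendsto_comp_contOn hφu.1 hJnn hJ0nn hintto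
        exact le_of_tendsto_of_tendsto hLHS hRHS hevle
      -- outer limit j → ∞
      set I := intPhi phi d0 with hIdef
      have hI0 : 0 < I := hphi.2.2 d0 hd0pos
      have hJto : Tendsto (fun j => intPhi phi ((1 / k j) * d0)) atTop (𝓝 I) := by
        have h1 : Tendsto (fun j => (1 / k j) * d0) atTop (𝓝 d0) := by
          have hinv : Tendsto (fun j => (k j)⁻¹) atTop (𝓝 (1:ℝ)) := by
            have := hk1.inv₀ one_ne_zero
            simpa using this
          have := hinv.mul_const d0
          simpa [one_div, one_mul] using this
        exact ((my_intPhi_cont hphi).tendsto _).comp h1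
      have hJnn : ∀ j, 0 ≤ intPhi phi ((1 / k j) * d0) :=
        fun j => my_intPhi_nonneg hphi (by have := (hkIoo j).1; positivity)
      have hfinal : ψ I ≤ F (ψ I) (φu I) := by
        apply le_of_tendsto_of_tendsto tendsto_const_nhds
          (my_tendsto_F hF (my_psi_nonneg hψ hI0.le) (my_phiu_nonneg hφu hI0.le)
            (fun j => my_psi_nonneg hψ (hJnn j)) (fun j => my_phiu_nonneg hφu (hJnn j))
            (my_tendsto_comp_contOn hψ.2.1 hJnn hI0.le hJto)
            (my_tendsto_comp_contOn hφu.1 hJnn hI0.le hJto))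
          (Eventually.of_forall hkey)
      have hle : F (ψ I) (φu I) ≤ ψ I :=
        hF.2.1 _ (my_psi_nonneg hψ hI0.le) _ (my_phiu_nonneg hφu hI0.le)
      have heq : F (ψ I) (φu I) = ψ I := le_antisymm hle hfinal
      rcases hF.2.2 _ (my_psi_nonneg hψ hI0.le) _ (my_phiu_nonneg hφu hI0.le) heq with h | h
      · exact absurd ((hψ.2.2 I hI0.le).mp h) (ne_of_gt hI0)
      · exact absurd h (ne_of_gt (hφu.2.2.1 I hI0))
  exact ⟨a, haM, hSa, hTa⟩


end
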